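/- For all m, k ≥ 1, every finite (mk, k)-grounded flag complex is (m−1)-connected. -/

import Mathlib

open scoped Classical

open scoped unitInterval Topology

/-- The geometric realization of the flag complex determined by the simple graph `G`
(simplices = cliques of `G`): the set of convex-combination weight functions whose
support is a clique. -/
def flagRealization {V : Type*} [Fintype V] (G : SimpleGraph V) : Set (V → ℝ) :=
  {w | (∀ v, 0 ≤ w v) ∧ (∑ v, w v = 1) ∧ G.IsClique {v | w v ≠ 0}}

/-- A topological space is `n`-connected if it is nonempty and all homotopy groups
`π_i` for `i ≤ n` (based at any point) are trivial; in particular `π_0` is a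
singleton, i.e. the space is path-connected. -/
def IsNConnectedSpace (n : ℕ) (X : Type*) [TopologicalSpace X] : Prop :=
  Nonempty X ∧ ∀ i ≤ n, ∀ x : X, Subsingleton (HomotopyGroup (Fin i) X x)

noncomputable section
namespace Stmt2Aux


open Finset

/-! ### fold max / min helpers -/

def fmax {ι : Type*} (s : Finset ι) (g : ι → ℝ) : ℝ := s.fold max 0 g
def fmin {ι : Type*} (s : Finset ι) (g : ι → ℝ) : ℝ := s.fold min 1 g

variable {ι : Type*} {s : Finset ι} {g : ι → ℝ} {c : ℝ}

theorem fmax_nonneg (s : Finset ι) (g : ι → ℝ) : 0 ≤ fmax s g := by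
  induction s using Finset.cons_induction_on with
  | empty => simp [fmax]
  | cons _ _ h ih => rw [fmax, Finset.fold_cons]; exact le_max_of_le_right ih

theorem le_fmax (h : ∀ a ∈ s, c ≤ g a) (hs : s.Nonempty) : c ≤ fmax s g := by
  obtain ⟨a, ha⟩ := hs
  induction s using Finset.cons_induction_on with
  | empty => simp at ha
  | cons _ _ hnot ih =>
    rw [fmax, Finset.fold_cons]
    rename_i b t
    rcases Finset.mem_cons.mp ha with rfl | ha'
    · exact le_max_of_le_left (h _ (Finset.mem_cons_self _ _))
    · exact le_max_of_le_right (ih (fun a ha => h a (Finset.mem_cons.mpr (Or.inr ha))) ha')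

theorem single_le_fmax (h : ∀ a ∈ s, 0 ≤ g a) {a : ι} (ha : a ∈ s) : g a ≤ fmax s g := by
  induction s using Finset.cons_induction_on with
  | empty => simp at ha
  | cons _ _ hnot ih =>
    rw [fmax, Finset.fold_cons]
    rcases Finset.mem_cons.mp ha with rfl | ha'
    · exact le_max_left _ _
    · exact le_trans (ih (fun b hb => h b (Finset.mem_cons.mpr (Or.inr hb))) ha') (le_max_right _ _)

theorem fmax_le (hc : 0 ≤ c) (h : ∀ a ∈ s, g a ≤ c) : fmax s g ≤ c := by
  induction s using Finset.cons_induction_on with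
  | empty => simpa [fmax]
  | cons _ _ hnot ih =>
    rw [fmax, Finset.fold_cons]
    exact max_le (h _ (Finset.mem_cons_self _ _))
      (ih (fun a ha => h a (Finset.mem_cons.mpr (Or.inr ha))))

theorem fmax_lt (hc : 0 < c) (h : ∀ a ∈ s, g a < c) : fmax s g < c := by
  induction s using Finset.cons_induction_on with
  | empty => simpa [fmax]
  | cons _ _ hnot ih =>
    rw [fmax, Finset.fold_cons]
    exact max_lt (h _ (Finset.mem_cons_self _ _))
      (ih (fun a ha => h a (Finset.mem_cons.mpr (Or.inr ha))))

theorem exists_lt_of_lt_fmax (hc : 0 ≤ c) (h : c < fmax s g) : ∃ a ∈ s, c < g a := by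
  by_contra hcon
  push_neg at hcon
  exact absurd (fmax_le hc hcon) (not_le.mpr h)

theorem fmin_le_one (s : Finset ι) (g : ι → ℝ) : fmin s g ≤ 1 := by
  induction s using Finset.cons_induction_on with
  | empty => simp [fmin]
  | cons _ _ h ih => rw [fmin, Finset.fold_cons]; exact min_le_of_right_le ih

theorem fmin_le (h : ∀ a ∈ s, g a ≤ c) (hc1 : (1:ℝ) ≤ c → s = ∅ → False) (hs : s.Nonempty) :
    fmin s g ≤ c := by
  obtain ⟨a, ha⟩ := hs
  induction s using Finset.cons_induction_on with
  | empty => simp at ha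
  | cons _ _ hnot ih =>
    rw [fmin, Finset.fold_cons]
    rcases Finset.mem_cons.mp ha with rfl | ha'
    · exact min_le_of_left_le (h _ (Finset.mem_cons_self _ _))
    · exact min_le_of_right_le (ih (fun a ha => h a (Finset.mem_cons.mpr (Or.inr ha)))
        (fun _ h2 => by simp [h2] at ha') ha')

theorem fmin_le_single {a : ι} (ha : a ∈ s) : fmin s g ≤ g a := by
  induction s using Finset.cons_induction_on with
  | empty => simp at ha
  | cons _ _ hnot ih =>
    rw [fmin, Finset.fold_cons]
    rcases Finset.mem_cons.mp ha with rfl | ha'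
    · exact min_le_left _ _
    · exact min_le_of_right_le (ih ha')

theorem le_fmin (hc : c ≤ 1) (h : ∀ a ∈ s, c ≤ g a) : c ≤ fmin s g := by
  induction s using Finset.cons_induction_on with
  | empty => simpa [fmin]
  | cons _ _ hnot ih =>
    rw [fmin, Finset.fold_cons]
    exact le_min (h _ (Finset.mem_cons_self _ _))
      (ih (fun a ha => h a (Finset.mem_cons.mpr (Or.inr ha))))

theorem continuous_fmax {X : Type*} [TopologicalSpace X] (s : Finset ι) (g : ι → X → ℝ)
    (hg : ∀ a ∈ s, Continuous (g a)) : Continuous (fun p => fmax s (fun a => g a p)) := by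
  induction s using Finset.cons_induction_on with
  | empty => simpa [fmax] using continuous_const
  | cons _ _ hnot ih =>
    simp only [fmax, Finset.fold_cons]
    exact Continuous.max (hg _ (Finset.mem_cons_self _ _))
      (ih (fun a ha => hg a (Finset.mem_cons.mpr (Or.inr ha))))

theorem continuous_fmin {X : Type*} [TopologicalSpace X] (s : Finset ι) (g : ι → X → ℝ)
    (hg : ∀ a ∈ s, Continuous (g a)) : Continuous (fun p => fmin s (fun a => g a p)) := by
  induction s using Finset.cons_induction_on with
  | empty => simpa [fmin] using continuous_const
  | cons _ _ hnot ih =>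
    simp only [fmin, Finset.fold_cons]
    exact Continuous.min (hg _ (Finset.mem_cons_self _ _))
      (ih (fun a ha => hg a (Finset.mem_cons.mpr (Or.inr ha))))

/-! ### positive part -/

def pos (r : ℝ) : ℝ := max r 0

theorem pos_nonneg (r : ℝ) : 0 ≤ pos r := le_max_right _ _
theorem pos_pos {r : ℝ} (h : 0 < r) : 0 < pos r := lt_max_of_lt_left h
theorem lt_of_pos_pos {r : ℝ} (h : 0 < pos r) : 0 < r := by
  by_contra hc; push_neg at hc; simp [pos, max_eq_right hc] at h
theorem pos_eq_zero {r : ℝ} (h : r ≤ 0) : pos r = 0 := max_eq_right h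
theorem pos_le {r c : ℝ} (h : r ≤ c) (hc : 0 ≤ c) : pos r ≤ c := max_le h hc
theorem le_pos (r : ℝ) : r ≤ pos r := le_max_left _ _
theorem continuous_pos : Continuous pos := continuous_id.max continuous_const


-- ### part 2


variable {V : Type*} [Fintype V] {G : SimpleGraph V}

theorem mem_flag_mk {w : V → ℝ} (h0 : ∀ v, 0 ≤ w v) (h1 : ∑ v, w v = 1)
    {C : Set V} (hC : G.IsClique C) (hs : ∀ v, w v ≠ 0 → v ∈ C) :
    w ∈ flagRealization G :=
  ⟨h0, h1, hC.subset (fun v hv => hs v hv)⟩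

def dirac (v : V) : V → ℝ := fun y => if y = v then 1 else 0

theorem dirac_nonneg (v y : V) : 0 ≤ dirac v y := by
  unfold dirac; split <;> norm_num

theorem dirac_sum (v : V) : ∑ y, dirac v y = 1 := by
  simp [dirac]

theorem dirac_supp {v y : V} (h : dirac v y ≠ 0) : y = v := by
  by_contra hc; simp [dirac, hc] at h

theorem dirac_mem (v : V) : dirac v ∈ flagRealization G := by
  refine mem_flag_mk (dirac_nonneg v) (dirac_sum v) (G.isClique_singleton v) ?_
  intro y hy; simp [dirac_supp hy]

/-- a point of the realization has nonempty support -/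
theorem exists_supp {w : V → ℝ} (hw : w ∈ flagRealization G) : ∃ v, w v ≠ 0 := by
  by_contra h
  push_neg at h
  have : (1:ℝ) = 0 := by rw [← hw.2.1]; simp [h]
  norm_num at this

/-- The key ground-set lemma: any vertex set of size at most `m` (coming as an
image of a finset) has a common neighbour (or equal) in `Δ`. -/
theorem exists_ground {m k : ℕ} {Δ : Finset V}
    (hcard : Δ.card = m * k + 1)
    (hground : ∀ v : V, (Δ.filter (fun u => ¬ (G.Adj v u ∨ v = u))).card ≤ k)
    (B : Finset V) (hB : B.card ≤ m) :
    ∃ u ∈ Δ, ∀ b ∈ B, G.Adj u b ∨ u = b := by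
  classical
  set bad : Finset V := B.biUnion (fun b => Δ.filter (fun u => ¬ (G.Adj b u ∨ b = u))) with hbad
  have hbadcard : bad.card ≤ m * k := by
    calc bad.card ≤ ∑ b ∈ B, (Δ.filter (fun u => ¬ (G.Adj b u ∨ b = u))).card :=
          Finset.card_biUnion_le
      _ ≤ ∑ _b ∈ B, k := Finset.sum_le_sum (fun b _ => hground b)
      _ = B.card * k := by rw [Finset.sum_const, smul_eq_mul]
      _ ≤ m * k := Nat.mul_le_mul_right k hB
  have hne : (Δ \ bad).Nonempty := by
    apply Finset.card_pos.mp
    have h2 : (Δ \ bad).card ≥ Δ.card - bad.card := Finset.le_card_sdiff _ _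
    omega
  obtain ⟨u, hu⟩ := hne
  rw [Finset.mem_sdiff] at hu
  refine ⟨u, hu.1, fun b hb => ?_⟩
  by_contra hcon
  apply hu.2
  rw [hbad, Finset.mem_biUnion]
  refine ⟨b, hb, Finset.mem_filter.mpr ⟨hu.1, ?_⟩⟩
  intro hadj
  apply hcon
  rcases hadj with h | h
  · exact Or.inl h.symm
  · exact Or.inr h.symm


-- ### part 3 : grid, hat functions, rho

/-- grid points -/
abbrev grid (N i : ℕ) := Fin i → Fin (N + 1)

variable {i N : ℕ}

/-- coordinates of a grid point, as real numbers (scaled by `N`) -/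
def qr (q : grid N i) (j : Fin i) : ℝ := ((q j : ℕ) : ℝ)

/-- the P1 hat function of the Freudenthal (Kuhn) triangulation at grid point `q`,
evaluated at `z` (scaled to lattice coordinates). -/
def lam (N : ℕ) (q : grid N i) (z : Fin i → I) : ℝ :=
  pos (1 - fmax univ (fun j => pos ((N : ℝ) * (z j : ℝ) - qr q j))
         - fmax univ (fun j => pos (qr q j - (N : ℝ) * (z j : ℝ))))

theorem lam_nonneg (q : grid N i) (z : Fin i → I) : 0 ≤ lam N q z := pos_nonneg _

theorem lam_le_one (q : grid N i) (z : Fin i → I) : lam N q z ≤ 1 := by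
  refine max_le ?_ (by norm_num)
  have h1 := fmax_nonneg univ (fun j => pos ((N : ℝ) * (z j : ℝ) - qr q j))
  have h2 := fmax_nonneg univ (fun j => pos (qr q j - (N : ℝ) * (z j : ℝ)))
  linarith

theorem continuous_lam (q : grid N i) : Continuous (fun z : Fin i → I => lam N q z) := by
  apply continuous_pos.comp
  apply Continuous.sub
  apply Continuous.sub continuous_const
  · exact continuous_fmax univ _ (fun j _ => continuous_pos.comp (by
      exact (continuous_const.mul ((continuous_subtype_val).comp (continuous_apply j))).sub
        continuous_const))
  · exact continuous_fmax univ _ (fun j _ => continuous_pos.comp (by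
      exact continuous_const.sub
        (continuous_const.mul ((continuous_subtype_val).comp (continuous_apply j)))))

theorem abs_eq_pos_add (r : ℝ) : |r| = pos r + pos (-r) := by
  unfold pos
  rcases le_or_gt 0 r with h | h
  · rw [abs_of_nonneg h, max_eq_left h, max_eq_right (by linarith)]; ring
  · rw [abs_of_neg h, max_eq_right (le_of_lt h), max_eq_left (by linarith)]; ring

/-- window property: active hats are within sup-distance 1. -/
theorem lam_window {q : grid N i} {z : Fin i → I} (h : 0 < lam N q z) (j : Fin i) :
    |(N : ℝ) * (z j : ℝ) - qr q j| < 1 := by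
  have h' := lt_of_pos_pos h
  have hA : pos ((N : ℝ) * (z j : ℝ) - qr q j)
      ≤ fmax univ (fun j => pos ((N : ℝ) * (z j : ℝ) - qr q j)) :=
    single_le_fmax (g := fun j => pos ((N : ℝ) * (z j : ℝ) - qr q j))
      (fun a _ => pos_nonneg _) (mem_univ j)
  have hB : pos (qr q j - (N : ℝ) * (z j : ℝ))
      ≤ fmax univ (fun j => pos (qr q j - (N : ℝ) * (z j : ℝ))) :=
    single_le_fmax (g := fun j => pos (qr q j - (N : ℝ) * (z j : ℝ)))
      (fun a _ => pos_nonneg _) (mem_univ j)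
  have := abs_eq_pos_add ((N : ℝ) * (z j : ℝ) - qr q j)
  rw [show -((N : ℝ) * (z j : ℝ) - qr q j) = qr q j - (N : ℝ) * (z j : ℝ) by ring] at this
  linarith

/-- two active grid points are comparable. -/
theorem lam_comparable {q q' : grid N i} {z : Fin i → I}
    (h : 0 < lam N q z) (h' : 0 < lam N q' z) :
    (∀ j, (q j : ℕ) ≤ (q' j : ℕ)) ∨ (∀ j, (q' j : ℕ) ≤ (q j : ℕ)) := by
  by_contra hcon
  push_neg at hcon
  obtain ⟨⟨j, hj⟩, ⟨l, hl⟩⟩ := hcon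
  have h1 := lt_of_pos_pos h
  have h2 := lt_of_pos_pos h'
  set A := fmax univ (fun j => pos ((N : ℝ) * (z j : ℝ) - qr q j)) with hA
  set B := fmax univ (fun j => pos (qr q j - (N : ℝ) * (z j : ℝ))) with hB
  set A' := fmax univ (fun j => pos ((N : ℝ) * (z j : ℝ) - qr q' j)) with hA'
  set B' := fmax univ (fun j => pos (qr q' j - (N : ℝ) * (z j : ℝ))) with hB'
  -- q' j < q j  and  q l < q' l
  have hjr : qr q' j + 1 ≤ qr q j := by
    unfold qr; push_cast
    have : (q' j : ℕ) + 1 ≤ (q j : ℕ) := hj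
    exact_mod_cast this
  have hlr : qr q l + 1 ≤ qr q' l := by
    unfold qr; push_cast
    have : (q l : ℕ) + 1 ≤ (q' l : ℕ) := hl
    exact_mod_cast this
  have hBj : qr q j - (N : ℝ) * (z j : ℝ) ≤ B :=
    le_trans (le_pos _) (single_le_fmax (g := fun j => pos (qr q j - (N : ℝ) * (z j : ℝ)))
      (fun a _ => pos_nonneg _) (mem_univ j))
  have hAl : (N : ℝ) * (z l : ℝ) - qr q l ≤ A :=
    le_trans (le_pos _) (single_le_fmax (g := fun j => pos ((N : ℝ) * (z j : ℝ) - qr q j))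
      (fun a _ => pos_nonneg _) (mem_univ l))
  have hA'j : (N : ℝ) * (z j : ℝ) - qr q' j ≤ A' :=
    le_trans (le_pos _) (single_le_fmax (g := fun j => pos ((N : ℝ) * (z j : ℝ) - qr q' j))
      (fun a _ => pos_nonneg _) (mem_univ j))
  have hB'l : qr q' l - (N : ℝ) * (z l : ℝ) ≤ B' :=
    le_trans (le_pos _) (single_le_fmax (g := fun j => pos (qr q' j - (N : ℝ) * (z j : ℝ)))
      (fun a _ => pos_nonneg _) (mem_univ l))
  -- A' ≥ 1 - B,  B' ≥ 1 - A
  have k1 : 1 - B ≤ A' := by nlinarith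
  have k2 : 1 - A ≤ B' := by nlinarith
  linarith

/-- the active set has at most `i+1` elements. -/
theorem card_active_le (N : ℕ) (z : Fin i → I) :
    ((univ : Finset (grid N i)).filter (fun q => 0 < lam N q z)).card ≤ i + 1 := by
  classical
  set A := (univ : Finset (grid N i)).filter (fun q => 0 < lam N q z) with hA
  rcases A.eq_empty_or_nonempty with he | hne
  · simp [he]
  obtain ⟨qb, hqb, hminb⟩ := A.exists_min_image (fun q => ∑ j, (q j : ℕ)) hne
  have hact : ∀ q ∈ A, 0 < lam N q z := fun q hq => (Finset.mem_filter.mp hq).2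
  -- qb is below every element of A
  have hbelow : ∀ q ∈ A, ∀ j, (qb j : ℕ) ≤ (q j : ℕ) := by
    intro q hq
    rcases lam_comparable (hact qb hqb) (hact q hq) with hcase | hcase
    · exact hcase
    · -- q ≤ qb pointwise; with minimality of sum, they are equal
      intro j
      have hsum1 : ∑ j, (qb j : ℕ) ≤ ∑ j, (q j : ℕ) := hminb q hq
      have hsum2 : ∑ j, (q j : ℕ) ≤ ∑ j, (qb j : ℕ) :=
        Finset.sum_le_sum (fun j _ => hcase j)
      have heq : ∀ j ∈ (univ : Finset (Fin i)), (q j : ℕ) = (qb j : ℕ) := by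
        apply (Finset.sum_eq_sum_iff_of_le (fun j _ => hcase j)).mp
        omega
      exact le_of_eq (heq j (mem_univ j)).symm
  -- window: q j ≤ qb j + 1
  have habove : ∀ q ∈ A, ∀ j, (q j : ℕ) ≤ (qb j : ℕ) + 1 := by
    intro q hq j
    have h1 := lam_window (hact q hq) j
    have h2 := lam_window (hact qb hqb) j
    have : |qr q j - qr qb j| < 2 := by
      have := abs_sub_abs_le_abs_sub (qr q j - (N : ℝ) * (z j : ℝ))
        (qr qb j - (N : ℝ) * (z j : ℝ))
      have h3 : |qr q j - qr qb j| ≤ |(N : ℝ) * (z j : ℝ) - qr q j|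
          + |(N : ℝ) * (z j : ℝ) - qr qb j| := by
        rw [show qr q j - qr qb j
            = -(((N : ℝ) * (z j : ℝ) - qr q j)) + ((N : ℝ) * (z j : ℝ) - qr qb j) by ring]
        exact le_trans (abs_add_le _ _) (by rw [abs_neg])
      linarith
    have : ((q j : ℕ) : ℝ) < ((qb j : ℕ) : ℝ) + 2 := by
      unfold qr at this
      have := abs_lt.mp this
      linarith [this.2]
    exact_mod_cast Nat.lt_add_one_iff.mp (by exact_mod_cast this)
  -- sum map is injective on A and lands in an interval of i+1 integers
  have hinj : Set.InjOn (fun q : grid N i => ∑ j, (q j : ℕ)) A := by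
    intro q hq q' hq' hsum
    simp only at hsum
    rcases lam_comparable (hact q (by simpa using hq)) (hact q' (by simpa using hq')) with hc | hc
    · funext j
      have := (Finset.sum_eq_sum_iff_of_le (fun j _ => hc j)).mp hsum
      have hj := this j (mem_univ j)
      exact Fin.ext (by exact_mod_cast hj)
    · funext j
      have := (Finset.sum_eq_sum_iff_of_le (fun j _ => hc j)).mp hsum.symm
      have hj := this j (mem_univ j)
      exact Fin.ext (by exact_mod_cast hj.symm)
  have himg : A.image (fun q => ∑ j, (q j : ℕ))
      ⊆ Finset.Icc (∑ j, (qb j : ℕ)) ((∑ j, (qb j : ℕ)) + i) := by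
    intro n hn
    obtain ⟨q, hq, rfl⟩ := Finset.mem_image.mp hn
    rw [Finset.mem_Icc]
    constructor
    · exact Finset.sum_le_sum (fun j _ => hbelow q hq j)
    · calc ∑ j, (q j : ℕ) ≤ ∑ j, ((qb j : ℕ) + 1) :=
            Finset.sum_le_sum (fun j _ => habove q hq j)
        _ = (∑ j, (qb j : ℕ)) + i := by
            rw [Finset.sum_add_distrib]; simp [Finset.card_univ]
  calc A.card = (A.image (fun q => ∑ j, (q j : ℕ))).card :=
        (Finset.card_image_of_injOn hinj).symm
    _ ≤ (Finset.Icc (∑ j, (qb j : ℕ)) ((∑ j, (qb j : ℕ)) + i)).card :=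
        Finset.card_le_card himg
    _ = i + 1 := by rw [Nat.card_Icc]; omega

/-- somewhere a hat is positive. -/
theorem exists_lam_pos (hN : 0 < N) (z : Fin i → I) : ∃ q : grid N i, 0 < lam N q z := by
  have hcoord : ∀ j : Fin i, ⌊(N : ℝ) * (z j : ℝ)⌋₊ < N + 1 := by
    intro j
    have h1 : (N : ℝ) * (z j : ℝ) ≤ (N : ℝ) := by
      have := (z j).2.2
      nlinarith [(z j).2.1]
    have := Nat.floor_le_of_le h1
    simpa using Nat.lt_succ_of_le (by simpa using this)
  refine ⟨fun j => ⟨⌊(N : ℝ) * (z j : ℝ)⌋₊, hcoord j⟩, ?_⟩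
  apply pos_pos
  have hB : fmax univ (fun j => pos (qr (fun j => (⟨⌊(N : ℝ) * (z j : ℝ)⌋₊, hcoord j⟩ : Fin (N+1))) j
      - (N : ℝ) * (z j : ℝ))) ≤ 0 := by
    apply fmax_le le_rfl
    intro j _
    apply pos_le _ le_rfl
    unfold qr
    simp only
    have : ((⌊(N : ℝ) * (z j : ℝ)⌋₊ : ℕ) : ℝ) ≤ (N : ℝ) * (z j : ℝ) :=
      Nat.floor_le (mul_nonneg (Nat.cast_nonneg N) (z j).2.1)
    linarith
  have hA : fmax univ (fun j => pos ((N : ℝ) * (z j : ℝ)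
      - qr (fun j => (⟨⌊(N : ℝ) * (z j : ℝ)⌋₊, hcoord j⟩ : Fin (N+1))) j)) < 1 := by
    apply fmax_lt one_pos
    intro j _
    have : (N : ℝ) * (z j : ℝ) - ((⌊(N : ℝ) * (z j : ℝ)⌋₊ : ℕ) : ℝ) < 1 := by
      have := Nat.lt_floor_add_one ((N : ℝ) * (z j : ℝ))
      linarith
    unfold qr pos
    simp only
    exact max_lt this one_pos
  have hB0 := fmax_nonneg univ (fun j => pos (qr (fun j => (⟨⌊(N : ℝ) * (z j : ℝ)⌋₊, hcoord j⟩ : Fin (N+1))) j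
      - (N : ℝ) * (z j : ℝ)))
  have : fmax univ (fun j => pos (qr (fun j => (⟨⌊(N : ℝ) * (z j : ℝ)⌋₊, hcoord j⟩ : Fin (N+1))) j
      - (N : ℝ) * (z j : ℝ))) = 0 := le_antisymm hB hB0
  rw [this]
  linarith

-- ### part 4 : rho and clamp

theorem fmax_attain {ι : Type*} (s : Finset ι) (g : ι → ℝ) :
    fmax s g = 0 ∨ ∃ a ∈ s, fmax s g = g a := by
  induction s using Finset.cons_induction_on with
  | empty => exact Or.inl (by simp [fmax])
  | cons _ _ hnot ih =>
    rw [fmax, Finset.fold_cons]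
    rename_i a t
    rcases le_total (t.fold max 0 g) (g a) with h | h
    · exact Or.inr ⟨a, Finset.mem_cons_self _ _, max_eq_left h⟩
    · rw [max_eq_right h]
      rcases ih with h0 | ⟨b, hb, he⟩
      · exact Or.inl h0
      · exact Or.inr ⟨b, Finset.mem_cons.mpr (Or.inr hb), he⟩

def rho (z : Fin i → I) : ℝ := fmax univ (fun j => |2 * (z j : ℝ) - 1|)

theorem continuous_rho : Continuous (fun z : Fin i → I => rho z) := by
  apply continuous_fmax
  intro j _
  exact ((continuous_const.mul ((continuous_subtype_val).comp (continuous_apply j))).sub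
    continuous_const).abs

theorem rho_nonneg (z : Fin i → I) : 0 ≤ rho z := fmax_nonneg _ _

theorem exists_rho_coord {z : Fin i → I} {c : ℝ} (hc : 0 < c) (h : c ≤ rho z) :
    ∃ j, c ≤ |2 * (z j : ℝ) - 1| := by
  rcases fmax_attain univ (fun j => |2 * (z j : ℝ) - 1|) with h0 | ⟨j, _, he⟩
  · rw [rho] at h; rw [h0] at h; linarith
  · exact ⟨j, by rw [rho, he] at h; exact h⟩

theorem boundary_rho {z : Fin i → I} (h : z ∈ Cube.boundary (Fin i)) : 1 ≤ rho z := by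
  obtain ⟨j, hj⟩ := h
  have : |2 * (z j : ℝ) - 1| = 1 := by
    rcases hj with h0 | h1
    · rw [h0]; norm_num
    · rw [h1]; norm_num
  calc (1:ℝ) = |2 * (z j : ℝ) - 1| := this.symm
    _ ≤ rho z := single_le_fmax (g := fun j => |2 * (z j : ℝ) - 1|)
        (fun a _ => abs_nonneg _) (mem_univ j)

/-- `rho` of the rescaled grid point. -/
def rhoQ (N : ℕ) (q : grid N i) : ℝ := fmax univ (fun j => |2 * qr q j / N - 1|)

theorem abs_two_bound {a b t : ℝ} (h : |a - b| ≤ t) : |2 * a - 1| ≤ |2 * b - 1| + 2 * t := by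
  have : |2 * a - 1| ≤ |2 * b - 1| + |2 * a - 2 * b| := by
    calc |2 * a - 1| = |(2 * b - 1) + (2 * a - 2 * b)| := by ring_nf
      _ ≤ |2 * b - 1| + |2 * a - 2 * b| := abs_add_le _ _
  have h2 : |2 * a - 2 * b| = 2 * |a - b| := by
    rw [show 2 * a - 2 * b = 2 * (a - b) by ring, abs_mul]
    norm_num
  linarith [abs_nonneg (a - b), h]

theorem rho_le_rhoQ {N : ℕ} (hN : 0 < N) {q : grid N i} {z : Fin i → I} {t : ℝ} (ht : 0 ≤ t)
    (h : ∀ j, |(N : ℝ) * (z j : ℝ) - qr q j| ≤ t) : rho z ≤ rhoQ N q + 2 * t / N := by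
  apply fmax_le
  · have := fmax_nonneg (univ : Finset (Fin i)) (fun j => |2 * qr q j / N - 1|)
    have : (0:ℝ) ≤ 2 * t / N := by positivity
    rw [rhoQ] at *
    linarith [fmax_nonneg (univ : Finset (Fin i)) (fun j => |2 * qr q j / N - 1|)]
  · intro j _
    have hNpos : (0:ℝ) < N := by exact_mod_cast hN
    have hj : |(z j : ℝ) - qr q j / N| ≤ t / N := by
      rw [show (z j : ℝ) - qr q j / N = ((N : ℝ) * (z j : ℝ) - qr q j) / N by
        field_simp, abs_div, abs_of_pos hNpos]
      gcongr
      exact h j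
    have := abs_two_bound hj
    have hq : |2 * (qr q j / N) - 1| ≤ rhoQ N q := by
      have := single_le_fmax (s := univ) (g := fun j => |2 * qr q j / N - 1|)
        (fun a _ => abs_nonneg _) (mem_univ j)
      calc |2 * (qr q j / N) - 1| = |2 * qr q j / N - 1| := by ring_nf
        _ ≤ rhoQ N q := this
    calc |2 * (z j : ℝ) - 1| ≤ |2 * (qr q j / N) - 1| + 2 * (t / N) := this
      _ ≤ rhoQ N q + 2 * t / N := by rw [mul_div_assoc]; linarith

theorem rhoQ_le_rho {N : ℕ} (hN : 0 < N) {q : grid N i} {z : Fin i → I} {t : ℝ} (ht : 0 ≤ t)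
    (h : ∀ j, |(N : ℝ) * (z j : ℝ) - qr q j| ≤ t) : rhoQ N q ≤ rho z + 2 * t / N := by
  apply fmax_le
  · have : (0:ℝ) ≤ 2 * t / N := by positivity
    linarith [rho_nonneg z]
  · intro j _
    have hNpos : (0:ℝ) < N := by exact_mod_cast hN
    have hj : |qr q j / N - (z j : ℝ)| ≤ t / N := by
      rw [abs_sub_comm, show (z j : ℝ) - qr q j / N = ((N : ℝ) * (z j : ℝ) - qr q j) / N by
        field_simp, abs_div, abs_of_pos hNpos]
      gcongr
      exact h j
    have := abs_two_bound hj
    have hz : |2 * (z j : ℝ) - 1| ≤ rho z :=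
      single_le_fmax (g := fun j => |2 * (z j : ℝ) - 1|) (fun a _ => abs_nonneg _) (mem_univ j)
    calc |2 * qr q j / N - 1| = |2 * (qr q j / N) - 1| := by ring_nf
      _ ≤ |2 * (z j : ℝ) - 1| + 2 * (t / N) := this
      _ ≤ rho z + 2 * t / N := by rw [mul_div_assoc]; linarith

/-- clamp to [0,1] -/
def cl (r : ℝ) : ℝ := max 0 (min 1 r)

theorem cl_nonneg (r : ℝ) : 0 ≤ cl r := le_max_left _ _
theorem cl_le_one (r : ℝ) : cl r ≤ 1 := max_le zero_le_one (min_le_left _ _)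
theorem cl_eq_zero {r : ℝ} (h : r ≤ 0) : cl r = 0 := by
  rw [cl, max_eq_left]; exact le_trans (min_le_right _ _) h
theorem cl_eq_one {r : ℝ} (h : 1 ≤ r) : cl r = 1 := by
  rw [cl, min_eq_left h, max_eq_right zero_le_one]
theorem continuous_cl : Continuous cl := continuous_const.max (continuous_const.min continuous_id)

-- ### part 5 : the cut-level homotopy machinery

variable {V : Type*} [Fintype V] {G : SimpleGraph V}

/-- the weight transferred to the Delta-vertex labelled by the set `S` at cut level `c`. -/
def Tfun (N : ℕ) (z : Fin i → I) (c : ℝ) (S : Finset (grid N i)) : ℝ :=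
  (S.card : ℝ) * pos (min c (fmin S (fun q => lam N q z)) - fmax (univ \ S) (fun q => lam N q z))

theorem Tfun_nonneg (N : ℕ) (z : Fin i → I) (c : ℝ) (S : Finset (grid N i)) :
    0 ≤ Tfun N z c S :=
  mul_nonneg (Nat.cast_nonneg _) (pos_nonneg _)

theorem Tfun_subset_active {N : ℕ} {z : Fin i → I} {c : ℝ} {S : Finset (grid N i)}
    (h : 0 < Tfun N z c S) : ∀ q ∈ S, 0 < lam N q z := by
  intro q hq
  have h2 : 0 < pos (min c (fmin S (fun q => lam N q z)) - fmax (univ \ S) (fun q => lam N q z)) := by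
    rcases (mul_pos_iff.mp h) with ⟨_, h2⟩ | ⟨h1, _⟩
    · exact h2
    · exact absurd h1 (not_lt.mpr (Nat.cast_nonneg _))
  have h3 := lt_of_pos_pos h2
  have h4 : 0 < fmin S (fun q => lam N q z) := by
    have := fmax_nonneg (univ \ S) (fun q => lam N q z)
    have hmin := min_le_right c (fmin S (fun q => lam N q z))
    linarith
  exact lt_of_lt_of_le h4 (fmin_le_single hq)

theorem Tfun_nonempty {N : ℕ} {z : Fin i → I} {c : ℝ} {S : Finset (grid N i)}
    (h : 0 < Tfun N z c S) : S.Nonempty := by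
  rcases S.eq_empty_or_nonempty with rfl | hne
  · simp [Tfun] at h
  · exact hne

theorem Tfun_mem_of_cut {N : ℕ} {z : Fin i → I} {c : ℝ} {S : Finset (grid N i)}
    (h : 0 < Tfun N z c S) {q : grid N i} (hq : c < lam N q z) : q ∈ S := by
  by_contra hqn
  have h2 : 0 < pos (min c (fmin S (fun q => lam N q z)) - fmax (univ \ S) (fun q => lam N q z)) := by
    rcases (mul_pos_iff.mp h) with ⟨_, h2⟩ | ⟨h1, _⟩
    · exact h2
    · exact absurd h1 (not_lt.mpr (Nat.cast_nonneg _))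
  have h3 := lt_of_pos_pos h2
  have h4 : lam N q z ≤ fmax (univ \ S) (fun q => lam N q z) :=
    single_le_fmax (g := fun q => lam N q z) (fun a _ => lam_nonneg _ _)
      (Finset.mem_sdiff.mpr ⟨mem_univ q, hqn⟩)
  have h5 := min_le_left c (fmin S (fun q => lam N q z))
  linarith

theorem Tfun_zero {N : ℕ} {z : Fin i → I} {c : ℝ} (hc : c ≤ 0) (S : Finset (grid N i)) :
    Tfun N z c S = 0 := by
  rcases S.eq_empty_or_nonempty with rfl | hne
  · simp [Tfun]
  rw [Tfun, pos_eq_zero, mul_zero]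
  have h1 : min c (fmin S (fun q => lam N q z)) ≤ 0 := le_trans (min_le_left _ _) hc
  have h2 := fmax_nonneg (univ \ S) (fun q => lam N q z)
  linarith

theorem Tfun_card_le {N : ℕ} {z : Fin i → I} {c : ℝ} {S : Finset (grid N i)}
    (h : 0 < Tfun N z c S) : S.card ≤ i + 1 := by
  have hsub : S ⊆ (univ : Finset (grid N i)).filter (fun q => 0 < lam N q z) := by
    intro q hq
    exact Finset.mem_filter.mpr ⟨mem_univ q, Tfun_subset_active h q hq⟩
  exact le_trans (Finset.card_le_card hsub) (card_active_le N z)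

/-- the `v`-part of the total mass at cut level `c`. -/
def vpart (N : ℕ) (z : Fin i → I) (c : ℝ) : ℝ := ∑ q : grid N i, pos (lam N q z - c)

/-- the `u`-part of the total mass at cut level `c`. -/
def upart (N : ℕ) (z : Fin i → I) (c : ℝ) : ℝ := ∑ S : Finset (grid N i), Tfun N z c S

theorem vpart_nonneg (N : ℕ) (z : Fin i → I) (c : ℝ) : 0 ≤ vpart N z c :=
  Finset.sum_nonneg (fun q _ => pos_nonneg _)

theorem upart_nonneg (N : ℕ) (z : Fin i → I) (c : ℝ) : 0 ≤ upart N z c :=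
  Finset.sum_nonneg (fun S _ => Tfun_nonneg _ _ _ _)

theorem denom_pos (hN : 0 < N) (z : Fin i → I) (c : ℝ) : 0 < vpart N z c + upart N z c := by
  classical
  by_cases hcase : ∃ q : grid N i, c < lam N q z
  · obtain ⟨q, hq⟩ := hcase
    have h1 : 0 < pos (lam N q z - c) := pos_pos (by linarith)
    have h2 : pos (lam N q z - c) ≤ vpart N z c :=
      Finset.single_le_sum (f := fun q => pos (lam N q z - c)) (fun q _ => pos_nonneg _)
        (mem_univ q)
    linarith [upart_nonneg N z c]
  · push_neg at hcase
    -- all lam ≤ c; the top level set gets positive T-weight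
    obtain ⟨q0, hq0⟩ := exists_lam_pos hN z
    obtain ⟨qM, _, hqM⟩ := (univ : Finset (grid N i)).exists_max_image
      (fun q => lam N q z) ⟨q0, mem_univ q0⟩
    set M := lam N qM z with hM
    have hMpos : 0 < M := lt_of_lt_of_le hq0 (hqM q0 (mem_univ q0))
    set S1 := (univ : Finset (grid N i)).filter (fun q => lam N q z = M) with hS1
    have hq1 : qM ∈ S1 := Finset.mem_filter.mpr ⟨mem_univ _, rfl⟩
    have hfmin : M ≤ fmin S1 (fun q => lam N q z) := by
      apply le_fmin (lam_le_one qM z)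
      intro q hq
      exact le_of_eq (Finset.mem_filter.mp hq).2.symm
    have hfmax : fmax (univ \ S1) (fun q => lam N q z) < M := by
      apply fmax_lt hMpos
      intro q hq
      rcases Finset.mem_sdiff.mp hq with ⟨_, hq2⟩
      have hne : lam N q z ≠ M := fun he => hq2 (Finset.mem_filter.mpr ⟨mem_univ _, he⟩)
      exact lt_of_le_of_ne (hqM q (mem_univ q)) hne
    have hT : 0 < Tfun N z c S1 := by
      apply mul_pos
      · exact_mod_cast Finset.card_pos.mpr ⟨qM, hq1⟩
      · apply pos_pos
        have : M ≤ min c (fmin S1 (fun q => lam N q z)) := le_min (hcase qM) hfmin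
        linarith
    have h2 : Tfun N z c S1 ≤ upart N z c :=
      Finset.single_le_sum (f := fun S => Tfun N z c S) (fun S _ => Tfun_nonneg _ _ _ _)
        (mem_univ S1)
    linarith [vpart_nonneg N z c]

/-- the (unnormalised) map of the cut-level homotopy. -/
def numer (N : ℕ) (vf : grid N i → V) (uf : Finset (grid N i) → V)
    (z : Fin i → I) (c : ℝ) : V → ℝ := fun y =>
  (∑ q : grid N i, pos (lam N q z - c) * dirac (vf q) y)
    + (∑ S : Finset (grid N i), Tfun N z c S * dirac (uf S) y)

theorem numer_nonneg (N : ℕ) (vf : grid N i → V) (uf : Finset (grid N i) → V)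
    (z : Fin i → I) (c : ℝ) (y : V) : 0 ≤ numer N vf uf z c y :=
  add_nonneg (Finset.sum_nonneg (fun q _ => mul_nonneg (pos_nonneg _) (dirac_nonneg _ _)))
    (Finset.sum_nonneg (fun S _ => mul_nonneg (Tfun_nonneg _ _ _ _) (dirac_nonneg _ _)))

theorem numer_sum (N : ℕ) (vf : grid N i → V) (uf : Finset (grid N i) → V)
    (z : Fin i → I) (c : ℝ) :
    ∑ y, numer N vf uf z c y = vpart N z c + upart N z c := by
  rw [vpart, upart]
  unfold numer
  rw [Finset.sum_add_distrib]
  congr 1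
  · rw [Finset.sum_comm]
    apply Finset.sum_congr rfl
    intro q _
    rw [← Finset.mul_sum, dirac_sum, mul_one]
  · rw [Finset.sum_comm]
    apply Finset.sum_congr rfl
    intro S _
    rw [← Finset.mul_sum, dirac_sum, mul_one]

theorem numer_supp {N : ℕ} {vf : grid N i → V} {uf : Finset (grid N i) → V}
    {z : Fin i → I} {c : ℝ} {y : V} (h : numer N vf uf z c y ≠ 0) :
    (∃ q, c < lam N q z ∧ vf q = y) ∨ (∃ S, 0 < Tfun N z c S ∧ uf S = y) := by
  have hor : (∑ q : grid N i, pos (lam N q z - c) * dirac (vf q) y) ≠ 0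
      ∨ (∑ S : Finset (grid N i), Tfun N z c S * dirac (uf S) y) ≠ 0 := by
    by_contra hcon
    push_neg at hcon
    rw [numer, hcon.1, hcon.2, add_zero] at h
    exact h rfl
  rcases hor with h1 | h2
  · left
    obtain ⟨q, _, hq⟩ := Finset.exists_ne_zero_of_sum_ne_zero h1
    have hp : pos (lam N q z - c) ≠ 0 := fun he => hq (by rw [he, zero_mul])
    have hd : dirac (vf q) y ≠ 0 := fun he => hq (by rw [he, mul_zero])
    refine ⟨q, ?_, (dirac_supp hd).symm⟩
    have : 0 < pos (lam N q z - c) := lt_of_le_of_ne (pos_nonneg _) (Ne.symm hp)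
    linarith [lt_of_pos_pos this]
  · right
    obtain ⟨S, _, hS⟩ := Finset.exists_ne_zero_of_sum_ne_zero h2
    have hp : Tfun N z c S ≠ 0 := fun he => hS (by rw [he, zero_mul])
    have hd : dirac (uf S) y ≠ 0 := fun he => hS (by rw [he, mul_zero])
    exact ⟨S, lt_of_le_of_ne (Tfun_nonneg _ _ _ _) (Ne.symm hp), (dirac_supp hd).symm⟩

/-- the normalised cut-level homotopy map. -/
def Kfun (N : ℕ) (vf : grid N i → V) (uf : Finset (grid N i) → V)
    (z : Fin i → I) (c : ℝ) : V → ℝ :=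
  fun y => (vpart N z c + upart N z c)⁻¹ * numer N vf uf z c y

theorem Kfun_nonneg (hN : 0 < N) (vf : grid N i → V) (uf : Finset (grid N i) → V)
    (z : Fin i → I) (c : ℝ) (y : V) : 0 ≤ Kfun N vf uf z c y :=
  mul_nonneg (inv_nonneg.mpr (le_of_lt (denom_pos hN z c))) (numer_nonneg _ _ _ _ _ _)

theorem Kfun_sum (hN : 0 < N) (vf : grid N i → V) (uf : Finset (grid N i) → V)
    (z : Fin i → I) (c : ℝ) : ∑ y, Kfun N vf uf z c y = 1 := by
  unfold Kfun
  rw [← Finset.mul_sum, numer_sum, inv_mul_cancel₀ (ne_of_gt (denom_pos hN z c))]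

theorem Kfun_supp {N : ℕ} {vf : grid N i → V} {uf : Finset (grid N i) → V}
    {z : Fin i → I} {c : ℝ} {y : V} (h : Kfun N vf uf z c y ≠ 0) :
    (∃ q, c < lam N q z ∧ vf q = y) ∨ (∃ S, 0 < Tfun N z c S ∧ uf S = y) := by
  apply numer_supp
  intro hc
  rw [Kfun, hc, mul_zero] at h
  exact h rfl

-- ### part 6 : continuity and membership of Kfun; convex combinations

theorem continuous_lamz {X : Type*} [TopologicalSpace X] {N : ℕ} (q : grid N i)
    {zf : X → (Fin i → I)} (hz : Continuous zf) :
    Continuous (fun p => lam N q (zf p)) := (continuous_lam q).comp hz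

theorem continuous_Kfun_coord {X : Type*} [TopologicalSpace X] {N : ℕ} (hN : 0 < N)
    (vf : grid N i → V) (uf : Finset (grid N i) → V)
    {zf : X → (Fin i → I)} {cf : X → ℝ} (hz : Continuous zf) (hc : Continuous cf) (y : V) :
    Continuous (fun p => Kfun N vf uf (zf p) (cf p) y) := by
  have hlam : ∀ q : grid N i, Continuous (fun p => lam N q (zf p)) :=
    fun q => continuous_lamz q hz
  have hT : ∀ S : Finset (grid N i), Continuous (fun p => Tfun N (zf p) (cf p) S) := by
    intro S
    apply Continuous.mul continuous_const
    apply continuous_pos.comp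
    apply Continuous.sub
    · exact Continuous.min hc (continuous_fmin S _ (fun q _ => hlam q))
    · exact continuous_fmax (univ \ S) _ (fun q _ => hlam q)
  have hvp : Continuous (fun p => vpart N (zf p) (cf p)) := by
    apply continuous_finset_sum
    intro q _
    exact continuous_pos.comp ((hlam q).sub hc)
  have hup : Continuous (fun p => upart N (zf p) (cf p)) := by
    apply continuous_finset_sum
    intro S _
    exact hT S
  have hnum : Continuous (fun p => numer N vf uf (zf p) (cf p) y) := by
    apply Continuous.add
    · apply continuous_finset_sum
      intro q _
      exact (continuous_pos.comp ((hlam q).sub hc)).mul continuous_const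
    · apply continuous_finset_sum
      intro S _
      exact (hT S).mul continuous_const
  have hden : Continuous (fun p => (vpart N (zf p) (cf p) + upart N (zf p) (cf p))⁻¹) :=
    (hvp.add hup).inv₀ (fun p => ne_of_gt (denom_pos hN (zf p) (cf p)))
  exact hden.mul hnum

theorem pair_clique {v0 u0 : V} (h : G.Adj u0 v0 ∨ u0 = v0) :
    G.IsClique ({v0, u0} : Set V) := by
  intro a ha b hb hne
  rcases ha with rfl | ha <;> rcases hb with rfl | hb
  · exact absurd rfl hne
  · rcases hb with rfl
    rcases h with h | h
    · exact h.symm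
    · exact absurd h.symm hne
  · rcases ha with rfl
    rcases h with h | h
    · exact h
    · exact absurd h hne
  · rcases ha with rfl; rcases hb with rfl
    exact absurd rfl hne

theorem Kfun_mem {m k : ℕ} {Δ : Finset V} (hclique : G.IsClique ↑Δ)
    {N : ℕ} (hi : i + 1 ≤ m)
    (vf : grid N i → V) (uf : Finset (grid N i) → V)
    {z : Fin i → I} {wz : V → ℝ} (hwz : wz ∈ flagRealization G)
    (hsupp : ∀ q : grid N i, 0 < lam N q z → wz (vf q) ≠ 0)
    (hufD : ∀ S : Finset (grid N i), S.card ≤ m →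
      uf S ∈ Δ ∧ ∀ q ∈ S, G.Adj (uf S) (vf q) ∨ uf S = vf q)
    {c : ℝ} (hc : 0 ≤ c) (hN : 0 < N) :
    Kfun N vf uf z c ∈ flagRealization G := by
  classical
  set C : Set V := (fun q : grid N i => vf q) '' {q | c < lam N q z}
    ∪ uf '' {S | 0 < Tfun N z c S} with hC
  have hcardm : ∀ S : Finset (grid N i), 0 < Tfun N z c S → S.card ≤ m :=
    fun S hS => le_trans (Tfun_card_le hS) hi
  have hCclique : G.IsClique C := by
    intro y hy y' hy' hne
    rcases hy with ⟨q, hq, rfl⟩ | ⟨S, hS, rfl⟩ <;> rcases hy' with ⟨q', hq', rfl⟩ | ⟨S', hS', rfl⟩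
    · -- both v-vertices: they are both in the support of wz
      have h1 : wz (vf q) ≠ 0 := hsupp q (lt_of_le_of_lt hc hq)
      have h2 : wz (vf q') ≠ 0 := hsupp q' (lt_of_le_of_lt hc hq')
      exact hwz.2.2 h1 h2 hne
    · -- v-vertex and u-vertex
      have hqS : q ∈ S' := Tfun_mem_of_cut hS' hq
      rcases (hufD S' (hcardm S' hS')).2 q hqS with h | h
      · exact h.symm
      · exact absurd h.symm hne
    · have hqS : q' ∈ S := Tfun_mem_of_cut hS hq'
      rcases (hufD S (hcardm S hS)).2 q' hqS with h | h
      · exact h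
      · exact absurd h hne
    · exact hclique ((hufD S (hcardm S hS)).1) ((hufD S' (hcardm S' hS')).1) hne
  refine mem_flag_mk (Kfun_nonneg hN vf uf z c) (Kfun_sum hN vf uf z c) hCclique ?_
  intro y hy
  rcases Kfun_supp hy with ⟨q, hq, rfl⟩ | ⟨S, hS, rfl⟩
  · exact Or.inl ⟨q, hq, rfl⟩
  · exact Or.inr ⟨S, hS, rfl⟩

theorem Kfun_supp_zero {N : ℕ} {vf : grid N i → V} {uf : Finset (grid N i) → V}
    {z : Fin i → I} {wz : V → ℝ}
    (hsupp : ∀ q : grid N i, 0 < lam N q z → wz (vf q) ≠ 0)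
    {y : V} (h : Kfun N vf uf z 0 y ≠ 0) : wz y ≠ 0 := by
  rcases Kfun_supp h with ⟨q, hq, rfl⟩ | ⟨S, hS, rfl⟩
  · exact hsupp q hq
  · rw [Tfun_zero le_rfl] at hS
    exact absurd hS (lt_irrefl 0)

theorem Kfun_supp_pair {N : ℕ} {vf : grid N i → V} {uf : Finset (grid N i) → V}
    {z : Fin i → I} {c : ℝ} (hc : 0 ≤ c) {v0 u0 : V}
    (hall : ∀ q : grid N i, 0 < lam N q z → vf q = v0)
    (hufimg : ∀ S : Finset (grid N i), S.Nonempty → (∀ q ∈ S, vf q = v0) → uf S = u0)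
    {y : V} (h : Kfun N vf uf z c y ≠ 0) : y = v0 ∨ y = u0 := by
  rcases Kfun_supp h with ⟨q, hq, rfl⟩ | ⟨S, hS, rfl⟩
  · exact Or.inl (hall q (lt_of_le_of_lt hc hq))
  · refine Or.inr (hufimg S (Tfun_nonempty hS) ?_)
    intro q hq
    exact hall q (Tfun_subset_active hS q hq)

theorem Kfun_supp_Delta {m k : ℕ} {Δ : Finset V} {N : ℕ} (hi : i + 1 ≤ m)
    {vf : grid N i → V} {uf : Finset (grid N i) → V}
    (hufD : ∀ S : Finset (grid N i), S.card ≤ m →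
      uf S ∈ Δ ∧ ∀ q ∈ S, G.Adj (uf S) (vf q) ∨ uf S = vf q)
    {z : Fin i → I} {c : ℝ} (hc1 : 1 ≤ c)
    {y : V} (h : Kfun N vf uf z c y ≠ 0) : y ∈ Δ := by
  rcases Kfun_supp h with ⟨q, hq, rfl⟩ | ⟨S, hS, rfl⟩
  · have := lam_le_one q z; linarith
  · exact (hufD S (le_trans (Tfun_card_le hS) hi)).1

/-- membership of a four-term convex combination supported in a clique -/
theorem comb4_mem {w1 w2 w3 w4 : V → ℝ}
    (h1 : w1 ∈ flagRealization G) (h2 : w2 ∈ flagRealization G)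
    (h3 : w3 ∈ flagRealization G) (h4 : w4 ∈ flagRealization G)
    {a b c d : ℝ} (ha : 0 ≤ a) (hb : 0 ≤ b) (hc : 0 ≤ c) (hd : 0 ≤ d)
    (habcd : a + b + c + d = 1) {C : Set V} (hC : G.IsClique C)
    (hs1 : a ≠ 0 → ∀ y, w1 y ≠ 0 → y ∈ C) (hs2 : b ≠ 0 → ∀ y, w2 y ≠ 0 → y ∈ C)
    (hs3 : c ≠ 0 → ∀ y, w3 y ≠ 0 → y ∈ C) (hs4 : d ≠ 0 → ∀ y, w4 y ≠ 0 → y ∈ C) :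
    (fun y => a * w1 y + b * w2 y + c * w3 y + d * w4 y) ∈ flagRealization G := by
  refine mem_flag_mk ?_ ?_ hC ?_
  · intro v
    have := h1.1 v; have := h2.1 v; have := h3.1 v; have := h4.1 v
    positivity
  · rw [Finset.sum_add_distrib, Finset.sum_add_distrib, Finset.sum_add_distrib,
      ← Finset.mul_sum, ← Finset.mul_sum, ← Finset.mul_sum, ← Finset.mul_sum,
      h1.2.1, h2.2.1, h3.2.1, h4.2.1]
    simpa using habcd
  · intro y hy
    by_contra hyC
    apply hy
    have e1 : a * w1 y = 0 := by
      rcases eq_or_ne a 0 with rfl | hne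
      · ring
      · rcases eq_or_ne (w1 y) 0 with he | hne2
        · rw [he, mul_zero]
        · exact absurd (hs1 hne y hne2) hyC
    have e2 : b * w2 y = 0 := by
      rcases eq_or_ne b 0 with rfl | hne
      · ring
      · rcases eq_or_ne (w2 y) 0 with he | hne2
        · rw [he, mul_zero]
        · exact absurd (hs2 hne y hne2) hyC
    have e3 : c * w3 y = 0 := by
      rcases eq_or_ne c 0 with rfl | hne
      · ring
      · rcases eq_or_ne (w3 y) 0 with he | hne2
        · rw [he, mul_zero]
        · exact absurd (hs3 hne y hne2) hyC
    have e4 : d * w4 y = 0 := by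
      rcases eq_or_ne d 0 with rfl | hne
      · ring
      · rcases eq_or_ne (w4 y) 0 with he | hne2
        · rw [he, mul_zero]
        · exact absurd (hs4 hne y hne2) hyC
    rw [e1, e2, e3, e4]; ring

-- ### part 7 : cutoff functions and the canonical map R

def b2 (z : Fin i → I) : ℝ := cl (16 * (1 - rho z))
def chi (z : Fin i → I) : ℝ := cl (16 * (7/8 - rho z))

theorem b2_nonneg (z : Fin i → I) : 0 ≤ b2 z := cl_nonneg _
theorem b2_le_one (z : Fin i → I) : b2 z ≤ 1 := cl_le_one _
theorem chi_nonneg (z : Fin i → I) : 0 ≤ chi z := cl_nonneg _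
theorem chi_le_one (z : Fin i → I) : chi z ≤ 1 := cl_le_one _

theorem b2_eq_zero {z : Fin i → I} (h : 1 ≤ rho z) : b2 z = 0 :=
  cl_eq_zero (by linarith)
theorem b2_eq_one {z : Fin i → I} (h : rho z ≤ 15/16) : b2 z = 1 :=
  cl_eq_one (by linarith)
theorem chi_eq_zero {z : Fin i → I} (h : 7/8 ≤ rho z) : chi z = 0 :=
  cl_eq_zero (by linarith)
theorem chi_eq_one {z : Fin i → I} (h : rho z ≤ 13/16) : chi z = 1 :=
  cl_eq_one (by linarith)

theorem continuous_b2 : Continuous (fun z : Fin i → I => b2 z) :=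
  continuous_cl.comp (continuous_const.mul (continuous_const.sub continuous_rho))
theorem continuous_chi : Continuous (fun z : Fin i → I => chi z) :=
  continuous_cl.comp (continuous_const.mul (continuous_const.sub continuous_rho))

/-- the canonical end map of all our homotopies -/
def Rval (x : V → ℝ) (v0 u0 : V) (z : Fin i → I) : V → ℝ := fun y =>
  (1 - b2 z) * x y + (b2 z * (1 - chi z)) * dirac v0 y + (b2 z * chi z) * dirac u0 y + 0 * x y

theorem Rval_mem {x : V → ℝ} (hx : x ∈ flagRealization G) {v0 u0 : V} (hv0 : x v0 ≠ 0)
    (hadj : G.Adj u0 v0 ∨ u0 = v0) (z : Fin i → I) : Rval x v0 u0 z ∈ flagRealization G := by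
  have hb0 := b2_nonneg z; have hb1 := b2_le_one z
  have hc0 := chi_nonneg z; have hc1 := chi_le_one z
  rcases le_total (rho z) (7/8) with hz | hz
  · -- inner zone : b2 = 1, supported in {v0, u0}
    refine comb4_mem hx (dirac_mem v0) (dirac_mem u0) hx
      (by linarith) (mul_nonneg hb0 (by linarith)) (mul_nonneg hb0 hc0) le_rfl (by ring)
      (pair_clique hadj) ?_ ?_ ?_ ?_
    · intro h; exact absurd (by rw [b2_eq_one (by linarith)]; ring) h
    · intro _ y hy; exact Or.inl (dirac_supp hy)
    · intro _ y hy; exact Or.inr (dirac_supp hy)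
    · intro h; exact absurd rfl h
  · -- outer zone : chi = 0, supported in supp x
    have hchi : chi z = 0 := chi_eq_zero hz
    refine comb4_mem hx (dirac_mem v0) (dirac_mem u0) hx
      (by linarith) (mul_nonneg hb0 (by linarith)) (mul_nonneg hb0 hc0) le_rfl (by ring)
      hx.2.2 ?_ ?_ ?_ ?_
    · intro _ y hy; exact hy
    · intro _ y hy; rw [dirac_supp hy]; exact hv0
    · intro h; exact absurd (by rw [hchi]; ring) h
    · intro h; exact absurd rfl h

theorem Rval_continuous (x : V → ℝ) (v0 u0 : V) :
    Continuous (fun z : Fin i → I => Rval x v0 u0 z) := by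
  apply continuous_pi
  intro y
  apply Continuous.add
  apply Continuous.add
  apply Continuous.add
  · exact (continuous_const.sub continuous_b2).mul continuous_const
  · exact (continuous_b2.mul (continuous_const.sub continuous_chi)).mul continuous_const
  · exact (continuous_b2.mul continuous_chi).mul continuous_const
  · exact continuous_const

theorem Rval_boundary {x : V → ℝ} {v0 u0 : V} {z : Fin i → I} (h : 1 ≤ rho z) :
    Rval x v0 u0 z = x := by
  funext y
  rw [Rval, b2_eq_zero h]
  ring

-- ### part 8 : assembling the homotopies

/-- helper to build a `HomotopyRel` from raw data -/
def mkHomotopyRel {X Y : Type*} [TopologicalSpace X] [TopologicalSpace Y]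
    (f₀ f₁ : C(X, Y)) (S : Set X) (F : C(I × X, Y))
    (h0 : ∀ z, F (0, z) = f₀ z) (h1 : ∀ z, F (1, z) = f₁ z)
    (hS : ∀ t z, z ∈ S → F (t, z) = f₀ z) : f₀.HomotopyRel f₁ S :=
  { toContinuousMap := F
    map_zero_left := h0
    map_one_left := h1
    prop' := fun t z hz => hS t z hz }

/-- affine interpolation inside the unit interval -/
def lerpI (s a b : I) : I :=
  ⟨(1 - (s : ℝ)) * (a : ℝ) + (s : ℝ) * (b : ℝ), by
    constructor
    · nlinarith [s.2.1, s.2.2, a.2.1, a.2.2, b.2.1, b.2.2]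
    · nlinarith [s.2.1, s.2.2, a.2.1, a.2.2, b.2.1, b.2.2]⟩

set_option maxHeartbeats 2000000 in
theorem homotopic_all {V : Type*} [Fintype V] {G : SimpleGraph V} {m k : ℕ}
    (hm : 1 ≤ m) {Δ : Finset V} (hclique : G.IsClique ↑Δ)
    (hcard : Δ.card = m * k + 1)
    (hground : ∀ v : V, (Δ.filter (fun u => ¬ (G.Adj v u ∨ v = u))).card ≤ k)
    {i : ℕ} (hi : i + 1 ≤ m) (x : ↥(flagRealization G))
    (f g : ↥(GenLoop (Fin i) ↥(flagRealization G) x)) :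
    GenLoop.Homotopic f g := by
  classical
  obtain ⟨v0, hv0⟩ := exists_supp x.2
  haveI : Nonempty V := ⟨v0⟩
  -- choice of Delta-neighbours
  have hwex : ∀ B : Finset V, B.card ≤ m → ∃ u ∈ Δ, ∀ b ∈ B, G.Adj u b ∨ u = b :=
    fun B hB => exists_ground hcard hground B hB
  set wf : Finset V → V := fun B =>
    if h : ∃ u ∈ Δ, ∀ b ∈ B, G.Adj u b ∨ u = b then h.choose else v0 with hwfdef
  have hwf : ∀ B : Finset V, B.card ≤ m →
      wf B ∈ Δ ∧ ∀ b ∈ B, G.Adj (wf B) b ∨ wf B = b := by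
    intro B hB
    have h := hwex B hB
    rw [hwfdef]
    simp only [dif_pos h]
    exact ⟨h.choose_spec.1, h.choose_spec.2⟩
  set u0 : V := wf {v0} with hu0def
  have hu0 : u0 ∈ Δ ∧ (G.Adj u0 v0 ∨ u0 = v0) := by
    have h := hwf {v0} (by simpa using hm)
    exact ⟨h.1, h.2 v0 (Finset.mem_singleton_self v0)⟩
  -- the canonical end map, as a generalized loop
  have hRmem : ∀ z : Fin i → I, Rval x.1 v0 u0 z ∈ flagRealization G :=
    fun z => Rval_mem x.2 hv0 hu0.2 z
  set RC : C((Fin i → I), ↥(flagRealization G)) :=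
    ⟨fun z => ⟨Rval x.1 v0 u0 z, hRmem z⟩,
      Continuous.subtype_mk (Rval_continuous x.1 v0 u0) _⟩ with hRCdef
  have hRbdry : ∀ z ∈ Cube.boundary (Fin i), RC z = x := by
    intro z hz
    apply Subtype.ext
    exact Rval_boundary (boundary_rho hz)
  set Rgen : ↥(GenLoop (Fin i) ↥(flagRealization G) x) := ⟨RC, hRbdry⟩ with hRgendef
  suffices key : ∀ fa : ↥(GenLoop (Fin i) ↥(flagRealization G) x),
      GenLoop.Homotopic fa Rgen by
    exact (key f).trans (key g).symm
  clear f g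
  intro f
  -- ---------------- stage 1 : collar ----------------
  set rI : I → I := fun t => ⟨cl ((8/5) * ((t : ℝ) - 3/16)), cl_nonneg _, cl_le_one _⟩
    with hrIdef
  have hrI0 : ∀ t : I, (t : ℝ) ≤ 3/16 → rI t = 0 := by
    intro t ht
    apply Subtype.ext
    rw [hrIdef]
    simp only
    rw [cl_eq_zero (by nlinarith)]
    rfl
  have hrI1 : ∀ t : I, 13/16 ≤ (t : ℝ) → rI t = 1 := by
    intro t ht
    apply Subtype.ext
    rw [hrIdef]
    simp only
    rw [cl_eq_one (by nlinarith)]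
    rfl
  have hrIcont : Continuous rI := by
    rw [hrIdef]
    exact Continuous.subtype_mk
      (continuous_cl.comp (continuous_const.mul (continuous_subtype_val.sub continuous_const))) _
  set rC : C((Fin i → I), (Fin i → I)) :=
    ⟨fun z j => rI (z j), continuous_pi (fun j => hrIcont.comp (continuous_apply j))⟩ with hrCdef
  set f1C : C((Fin i → I), ↥(flagRealization G)) := f.1.comp rC with hf1Cdef
  have hrbd : ∀ z : Fin i → I, 5/8 ≤ rho z → rC z ∈ Cube.boundary (Fin i) := by
    intro z hz
    obtain ⟨j, hj⟩ := exists_rho_coord (by norm_num) hz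
    rcases le_abs.mp hj with h | h
    · exact ⟨j, Or.inr (by show rI (z j) = 1; exact hrI1 (z j) (by linarith))⟩
    · exact ⟨j, Or.inl (by show rI (z j) = 0; exact hrI0 (z j) (by linarith))⟩
  have hcollar : ∀ z : Fin i → I, 5/8 ≤ rho z → f1C z = x := by
    intro z hz
    rw [hf1Cdef]
    exact f.2 (rC z) (hrbd z hz)
  -- homotopy 1 : f ≃ f1C rel boundary
  have H1 : (f.1).HomotopyRel f1C (Cube.boundary (Fin i)) := by
    refine mkHomotopyRel f.1 f1C _
      ⟨fun p => f.1 (fun j => lerpI p.1 (p.2 j) (rI (p.2 j))), ?_⟩ ?_ ?_ ?_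
    · apply (map_continuous f.1).comp
      apply continuous_pi
      intro j
      apply Continuous.subtype_mk
      have h1 : Continuous fun p : I × (Fin i → I) => ((p.1 : ℝ)) :=
        continuous_subtype_val.comp continuous_fst
      have h2 : Continuous fun p : I × (Fin i → I) => ((p.2 j : ℝ)) :=
        continuous_subtype_val.comp ((continuous_apply j).comp continuous_snd)
      have h3 : Continuous fun p : I × (Fin i → I) => ((rI (p.2 j) : ℝ)) :=
        continuous_subtype_val.comp
          (hrIcont.comp ((continuous_apply j).comp continuous_snd))
      exact ((continuous_const.sub h1).mul h2).add (h1.mul h3)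
    · intro z
      show f.1 _ = f.1 z
      apply congrArg
      funext j
      apply Subtype.ext
      show (1 - ((0:I) : ℝ)) * (z j : ℝ) + ((0:I) : ℝ) * (rI (z j) : ℝ) = (z j : ℝ)
      norm_num
    · intro z
      show f.1 _ = f1C z
      rw [hf1Cdef]
      show f.1 _ = f.1 (rC z)
      apply congrArg
      funext j
      apply Subtype.ext
      show (1 - ((1:I) : ℝ)) * (z j : ℝ) + ((1:I) : ℝ) * (rI (z j) : ℝ) = ((rC z j : ℝ))
      show (1 - ((1:I) : ℝ)) * (z j : ℝ) + ((1:I) : ℝ) * (rI (z j) : ℝ) = ((rI (z j) : ℝ))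
      norm_num
    · intro t z hz
      obtain ⟨j, hj⟩ := hz
      have harg : (fun j => lerpI t (z j) (rI (z j))) ∈ Cube.boundary (Fin i) := by
        refine ⟨j, ?_⟩
        rcases hj with h0 | h1
        · left
          apply Subtype.ext
          show (1 - (t : ℝ)) * (z j : ℝ) + (t : ℝ) * (rI (z j) : ℝ) = 0
          have hz0 : (z j : ℝ) = 0 := by rw [h0]; rfl
          have hr0 : rI (z j) = 0 := hrI0 (z j) (by rw [hz0]; norm_num)
          rw [hz0, hr0]
          show (1 - (t : ℝ)) * 0 + (t : ℝ) * ((0:I) : ℝ) = 0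
          norm_num
        · right
          apply Subtype.ext
          show (1 - (t : ℝ)) * (z j : ℝ) + (t : ℝ) * (rI (z j) : ℝ) = 1
          have hz1 : (z j : ℝ) = 1 := by rw [h1]; rfl
          have hr1 : rI (z j) = 1 := hrI1 (z j) (by rw [hz1]; norm_num)
          rw [hz1, hr1]
          show (1 - (t : ℝ)) * 1 + (t : ℝ) * ((1:I) : ℝ) = 1
          norm_num
      show f.1 _ = f.1 z
      rw [f.2 _ harg, f.2 z ⟨j, hj⟩]
  -- ---------------- choice of the grid size N ----------------
  have hucont : UniformContinuous f1C := CompactSpace.uniformContinuous_of_continuous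
    (map_continuous f1C)
  have hcardV : 0 < Fintype.card V := Fintype.card_pos
  set ε : ℝ := 1 / (2 * Fintype.card V) with hεdef
  have hε : 0 < ε := by rw [hεdef]; positivity
  obtain ⟨δ, hδpos, hδ⟩ := Metric.uniformContinuous_iff.mp hucont ε hε
  set N : ℕ := 64 + ⌈(2:ℝ)/δ⌉₊ with hNdef
  have hN64 : (64:ℝ) ≤ (N:ℝ) := by
    rw [hNdef]; push_cast
    have : (0:ℝ) ≤ (⌈(2:ℝ)/δ⌉₊ : ℝ) := Nat.cast_nonneg _
    linarith
  have hNpos : 0 < N := by rw [hNdef]; omega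
  have hNRpos : (0:ℝ) < (N:ℝ) := by exact_mod_cast hNpos
  have hNδ : (2:ℝ)/N < δ := by
    have h1 : (2:ℝ)/δ ≤ (⌈(2:ℝ)/δ⌉₊ : ℝ) := Nat.le_ceil _
    have h2 : (2:ℝ)/δ < (N:ℝ) := by
      rw [hNdef]; push_cast; linarith
    rw [div_lt_iff₀ hNRpos] at *
    rw [div_lt_iff₀ hδpos] at h2
    nlinarith
  -- the grid points as points of the cube
  have hqmem : ∀ (q : grid N i) (j : Fin i), qr q j / (N:ℝ) ∈ Set.Icc (0:ℝ) 1 := by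
    intro q j
    constructor
    · apply div_nonneg _ (le_of_lt hNRpos)
      exact Nat.cast_nonneg _
    · rw [div_le_one hNRpos]
      have h := Fin.is_le (q j)
      show ((q j : ℕ) : ℝ) ≤ (N : ℝ)
      exact_mod_cast h
  set qhat : grid N i → (Fin i → I) := fun q j => ⟨qr q j / (N:ℝ), hqmem q j⟩ with hqhatdef
  have hqwin : ∀ (q : grid N i) (z : Fin i → I),
      (∀ j, |(N:ℝ) * (z j : ℝ) - qr q j| ≤ 2) → dist z (qhat q) ≤ 2/N := by
    intro q z hwin
    rw [dist_pi_le_iff (by positivity)]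
    intro j
    rw [Subtype.dist_eq, Real.dist_eq]
    show |(z j : ℝ) - qr q j / (N:ℝ)| ≤ 2/N
    rw [show (z j : ℝ) - qr q j / N = ((N : ℝ) * (z j : ℝ) - qr q j) / N by
      field_simp, abs_div, abs_of_pos hNRpos]
    gcongr
    exact hwin j
  -- choice of the vertex labels
  have hpick : ∀ q : grid N i, ∃ v : V, 1/(Fintype.card V : ℝ) ≤ (f1C (qhat q)).1 v := by
    intro q
    by_contra hcon
    push_neg at hcon
    have hsum := (f1C (qhat q)).2.2.1
    have hlt : (1:ℝ) < 1 := by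
      calc (1:ℝ) = ∑ v, (f1C (qhat q)).1 v := hsum.symm
        _ < ∑ _v : V, 1/(Fintype.card V : ℝ) :=
            Finset.sum_lt_sum_of_nonempty Finset.univ_nonempty (fun v _ => hcon v)
        _ = 1 := by
            rw [Finset.sum_const, Finset.card_univ, nsmul_eq_mul]
            field_simp
    linarith
  set vf : grid N i → V := fun q => if 3/4 ≤ rhoQ N q then v0 else (hpick q).choose
    with hvfdef
  have hvf : ∀ (q : grid N i) (z : Fin i → I),
      (∀ j, |(N:ℝ) * (z j : ℝ) - qr q j| ≤ 2) → (f1C z).1 (vf q) ≠ 0 := by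
    intro q z hwin
    rw [hvfdef]
    simp only
    split_ifs with hcase
    · -- collar zone : value is x, and v0 is in the support of x
      have h1 : rhoQ N q ≤ rho z + 2*2/N := rhoQ_le_rho hNpos (by norm_num) hwin
      have h4N : (4:ℝ)/N ≤ 1/16 := by
        rw [div_le_div_iff₀ hNRpos (by norm_num)]
        linarith
      have h2 : 5/8 ≤ rho z := by
        have : 2*2/(N:ℝ) = 4/N := by ring
        rw [this] at h1
        linarith
      rw [hcollar z h2]
      exact hv0
    · -- the generic choice : close to the grid point
      have hd := hqwin q z hwin
      have hlt : dist z (qhat q) < δ := lt_of_le_of_lt hd hNδ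
      have hdist := hδ hlt
      have hcoord : |(f1C z).1 ((hpick q).choose) - (f1C (qhat q)).1 ((hpick q).choose)|
          ≤ dist (f1C z) (f1C (qhat q)) := by
        rw [Subtype.dist_eq]
        have := dist_le_pi_dist ((f1C z) : V → ℝ) ((f1C (qhat q)) : V → ℝ) ((hpick q).choose)
        rw [Real.dist_eq] at this
        exact this
      have hbig := (hpick q).choose_spec
      have hεε : ε = 1/(2 * Fintype.card V) := hεdef
      have hcard1 : (1:ℝ) ≤ (Fintype.card V : ℝ) := by exact_mod_cast hcardV
      have h2ε : 2 * ε ≤ 1/(Fintype.card V : ℝ) := by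
        rw [hεε]
        rw [show 2 * (1/(2 * (Fintype.card V : ℝ))) = 1/(Fintype.card V : ℝ) by
          field_simp]
      intro hzero
      rw [hzero] at hcoord
      have := abs_le.mp hcoord
      have h5 : (f1C (qhat q)).1 ((hpick q).choose) ≤ dist (f1C z) (f1C (qhat q)) := by
        have := this.1
        linarith [abs_nonneg ((0:ℝ) - (f1C (qhat q)).1 ((hpick q).choose))]
      linarith [hbig, hdist, hε]
  have hvf_active : ∀ (q : grid N i) (z : Fin i → I),
      0 < lam N q z → (f1C z).1 (vf q) ≠ 0 := by
    intro q z h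
    exact hvf q z (fun j => le_of_lt (lt_of_lt_of_le (lam_window h j) (by norm_num)))
  have hv0rule : ∀ (z : Fin i → I) (q : grid N i),
      13/16 ≤ rho z → 0 < lam N q z → vf q = v0 := by
    intro z q hz hq
    have h1 : rho z ≤ rhoQ N q + 2*1/N :=
      rho_le_rhoQ hNpos (by norm_num) (fun j => le_of_lt (lam_window hq j))
    have h2N : (2:ℝ)/N ≤ 1/32 := by
      rw [div_le_div_iff₀ hNRpos (by norm_num)]
      linarith
    have h2 : (3:ℝ)/4 ≤ rhoQ N q := by
      have : 2*1/(N:ℝ) = 2/N := by ring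
      rw [this] at h1
      linarith
    rw [hvfdef]
    simp only [if_pos h2]
  -- the Delta labels
  set uf : Finset (grid N i) → V := fun S => wf (S.image vf) with hufdef
  have hufD : ∀ S : Finset (grid N i), S.card ≤ m →
      uf S ∈ Δ ∧ ∀ q ∈ S, G.Adj (uf S) (vf q) ∨ uf S = vf q := by
    intro S hS
    have h := hwf (S.image vf) (le_trans Finset.card_image_le hS)
    exact ⟨h.1, fun q hq => h.2 (vf q) (Finset.mem_image_of_mem vf hq)⟩
  have hufimg : ∀ S : Finset (grid N i), S.Nonempty → (∀ q ∈ S, vf q = v0) → uf S = u0 := by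
    intro S hne hall
    have himg : S.image vf = {v0} := by
      rw [Finset.image_congr (g := fun _ => v0) (fun q hq => hall q hq)]
      exact Finset.image_const hne v0
    rw [hufdef]
    simp only [himg, hu0def]
  have hKmem : ∀ (z : Fin i → I) (c : ℝ), 0 ≤ c → Kfun N vf uf z c ∈ flagRealization G :=
    fun z c hc => Kfun_mem (k := k) hclique hi vf uf (f1C z).2
      (fun q hq => hvf_active q z hq) hufD hc hNpos
  -- ---------------- memberships of the stage maps ----------------
  have hsupp0 : ∀ (z : Fin i → I) {y : V}, Kfun N vf uf z 0 y ≠ 0 → (f1C z).1 y ≠ 0 := by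
    intro z y hy
    exact Kfun_supp_zero (fun q hq => hvf_active q z hq) hy
  have hW3mem : ∀ (c : ℝ), 0 ≤ c → ∀ z : Fin i → I, (7/8 ≤ rho z → c = 0) →
      (fun y => (1 - b2 z) * x.1 y + (b2 z) * Kfun N vf uf z c y
        + 0 * x.1 y + 0 * x.1 y) ∈ flagRealization G := by
    intro c hc z hzc
    have hb0 := b2_nonneg z; have hb1 := b2_le_one z
    rcases le_total (rho z) (15/16) with hz | hz
    · have hb := b2_eq_one (z := z) hz
      refine comb4_mem x.2 (hKmem z c hc) x.2 x.2
        (by linarith) hb0 le_rfl le_rfl (by ring) (hKmem z c hc).2.2 ?_ ?_ ?_ ?_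
      · intro h; exact absurd (by rw [hb]; ring) h
      · intro _ y hy; exact hy
      · intro h; exact absurd rfl h
      · intro h; exact absurd rfl h
    · have hc0 : c = 0 := hzc (by linarith)
      have hcol : (f1C z).1 = x.1 := congrArg Subtype.val (hcollar z (by linarith))
      refine comb4_mem x.2 (hKmem z c hc) x.2 x.2
        (by linarith) hb0 le_rfl le_rfl (by ring) x.2.2.2 ?_ ?_ ?_ ?_
      · intro _ y hy; exact hy
      · intro _ y hy
        rw [hc0] at hy
        have := hsupp0 z hy
        rw [hcol] at this
        exact this
      · intro h; exact absurd rfl h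
      · intro h; exact absurd rfl h
  have hW2mem : ∀ (s : ℝ), 0 ≤ s → s ≤ 1 → ∀ z : Fin i → I,
      (fun y => (1 - s) * (f1C z).1 y + (s * (1 - b2 z)) * x.1 y
        + (s * b2 z) * Kfun N vf uf z 0 y + 0 * x.1 y) ∈ flagRealization G := by
    intro s hs0 hs1 z
    have hb0 := b2_nonneg z; have hb1 := b2_le_one z
    rcases le_total (rho z) (15/16) with hz | hz
    · have hb := b2_eq_one (z := z) hz
      refine comb4_mem (f1C z).2 x.2 (hKmem z 0 le_rfl) x.2
        (by linarith) (mul_nonneg hs0 (by linarith)) (mul_nonneg hs0 hb0) le_rfl (by ring)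
        (f1C z).2.2.2 ?_ ?_ ?_ ?_
      · intro _ y hy; exact hy
      · intro h; exact absurd (by rw [hb]; ring) h
      · intro _ y hy; exact hsupp0 z hy
      · intro h; exact absurd rfl h
    · have hcol : (f1C z).1 = x.1 := congrArg Subtype.val (hcollar z (by linarith))
      refine comb4_mem (f1C z).2 x.2 (hKmem z 0 le_rfl) x.2
        (by linarith) (mul_nonneg hs0 (by linarith)) (mul_nonneg hs0 hb0) le_rfl (by ring)
        x.2.2.2 ?_ ?_ ?_ ?_
      · intro _ y hy; rw [hcol] at hy; exact hy
      · intro _ y hy; exact hy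
      · intro _ y hy
        have := hsupp0 z hy
        rw [hcol] at this
        exact this
      · intro h; exact absurd rfl h
  have hW4mem : ∀ (t : ℝ), 0 ≤ t → t ≤ 1 → ∀ z : Fin i → I,
      (fun y => (1 - b2 z) * x.1 y + (b2 z * (1 - t)) * Kfun N vf uf z (chi z) y
        + (b2 z * t * (1 - chi z)) * dirac v0 y + (b2 z * t * chi z) * dirac u0 y)
        ∈ flagRealization G := by
    intro t ht0 ht1 z
    have hb0 := b2_nonneg z; have hb1 := b2_le_one z
    have hch0 := chi_nonneg z; have hch1 := chi_le_one z
    have hKm := hKmem z (chi z) hch0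
    rcases le_total (rho z) (13/16) with hz | hz
    · -- inner zone : everything is in Delta
      have hchi := chi_eq_one (z := z) hz
      have hb := b2_eq_one (z := z) (by linarith)
      refine comb4_mem x.2 hKm (dirac_mem v0) (dirac_mem u0)
        (by linarith) (mul_nonneg hb0 (by linarith)) (mul_nonneg (mul_nonneg hb0 ht0) (by linarith)) (mul_nonneg (mul_nonneg hb0 ht0) hch0) (by ring)
        hclique ?_ ?_ ?_ ?_
      · intro h; exact absurd (by rw [hb]; ring) h
      · intro _ y hy
        exact Kfun_supp_Delta (k := k) hi hufD (by rw [hchi]) hy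
      · intro h; exact absurd (by rw [hchi]; ring) h
      · intro _ y hy; rw [dirac_supp hy]; exact hu0.1
    · rcases le_total (rho z) (7/8) with hz2 | hz2
      · -- middle zone : supported on {v0, u0}
        have hb := b2_eq_one (z := z) (by linarith)
        refine comb4_mem x.2 hKm (dirac_mem v0) (dirac_mem u0)
          (by linarith) (mul_nonneg hb0 (by linarith)) (mul_nonneg (mul_nonneg hb0 ht0) (by linarith)) (mul_nonneg (mul_nonneg hb0 ht0) hch0) (by ring)
          (pair_clique hu0.2) ?_ ?_ ?_ ?_
        · intro h; exact absurd (by rw [hb]; ring) h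
        · intro _ y hy
          rcases Kfun_supp_pair hch0 (fun q hq => hv0rule z q hz hq) hufimg hy with h | h
          · exact Or.inl h
          · exact Or.inr h
        · intro _ y hy; exact Or.inl (dirac_supp hy)
        · intro _ y hy; exact Or.inr (dirac_supp hy)
      · -- outer zone : supported in supp x
        have hchi := chi_eq_zero (z := z) hz2
        have hcol : (f1C z).1 = x.1 := congrArg Subtype.val (hcollar z (by linarith))
        refine comb4_mem x.2 hKm (dirac_mem v0) (dirac_mem u0)
          (by linarith) (mul_nonneg hb0 (by linarith)) (mul_nonneg (mul_nonneg hb0 ht0) (by linarith)) (mul_nonneg (mul_nonneg hb0 ht0) hch0) (by ring)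
          x.2.2.2 ?_ ?_ ?_ ?_
        · intro _ y hy; exact hy
        · intro _ y hy
          rw [hchi] at hy
          have := hsupp0 z hy
          rw [hcol] at this
          exact this
        · intro _ y hy; rw [dirac_supp hy]; exact hv0
        · intro h; exact absurd (by rw [hchi]; ring) h
  -- ---------------- the stage maps as continuous maps ----------------
  have hcont_b2 : Continuous (fun p : I × (Fin i → I) => b2 p.2) :=
    continuous_b2.comp continuous_snd
  have hcont_chi : Continuous (fun p : I × (Fin i → I) => chi p.2) :=
    continuous_chi.comp continuous_snd
  have hcont_s : Continuous (fun p : I × (Fin i → I) => ((p.1 : ℝ))) :=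
    continuous_subtype_val.comp continuous_fst
  have hcont_f1 : ∀ y, Continuous (fun p : I × (Fin i → I) => (f1C p.2).1 y) := fun y =>
    (continuous_apply y).comp
      (continuous_subtype_val.comp ((map_continuous f1C).comp continuous_snd))
  have hcont_x : ∀ y, Continuous (fun _ : I × (Fin i → I) => x.1 y) := fun y => continuous_const
  have h01 : ((0 : I) : ℝ) = 0 := rfl
  have h11 : ((1 : I) : ℝ) = 1 := rfl
  set P3C : C((Fin i → I), ↥(flagRealization G)) :=
    ⟨fun z => ⟨fun y => (1 - b2 z) * x.1 y + (b2 z) * Kfun N vf uf z 0 y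
        + 0 * x.1 y + 0 * x.1 y, hW3mem 0 le_rfl z (fun _ => rfl)⟩, by
      apply Continuous.subtype_mk
      apply continuous_pi
      intro y
      have hK : Continuous (fun z : Fin i → I => Kfun N vf uf z 0 y) :=
        continuous_Kfun_coord hNpos vf uf continuous_id continuous_const y
      exact ((((continuous_const.sub continuous_b2).mul continuous_const).add
        (continuous_b2.mul hK)).add continuous_const).add continuous_const⟩
    with hP3Cdef
  set EC : C((Fin i → I), ↥(flagRealization G)) :=
    ⟨fun z => ⟨fun y => (1 - b2 z) * x.1 y + (b2 z) * Kfun N vf uf z (chi z) y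
        + 0 * x.1 y + 0 * x.1 y, hW3mem (chi z) (chi_nonneg z) z (fun h => chi_eq_zero h)⟩, by
      apply Continuous.subtype_mk
      apply continuous_pi
      intro y
      have hK : Continuous (fun z : Fin i → I => Kfun N vf uf z (chi z) y) :=
        continuous_Kfun_coord hNpos vf uf continuous_id continuous_chi y
      exact ((((continuous_const.sub continuous_b2).mul continuous_const).add
        (continuous_b2.mul hK)).add continuous_const).add continuous_const⟩
    with hECdef
  -- ---------------- homotopy 2 : f1C to P3C ----------------
  have H2 : f1C.HomotopyRel P3C (Cube.boundary (Fin i)) := by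
    refine mkHomotopyRel f1C P3C _
      ⟨fun p => ⟨fun y => (1 - (p.1 : ℝ)) * (f1C p.2).1 y
          + ((p.1 : ℝ) * (1 - b2 p.2)) * x.1 y
          + ((p.1 : ℝ) * b2 p.2) * Kfun N vf uf p.2 0 y + 0 * x.1 y,
        hW2mem (p.1 : ℝ) p.1.2.1 p.1.2.2 p.2⟩, ?_⟩ ?_ ?_ ?_
    · apply Continuous.subtype_mk
      apply continuous_pi
      intro y
      have hK : Continuous (fun p : I × (Fin i → I) => Kfun N vf uf p.2 0 y) :=
        continuous_Kfun_coord hNpos vf uf continuous_snd continuous_const y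
      exact ((((continuous_const.sub hcont_s).mul (hcont_f1 y)).add
        ((hcont_s.mul (continuous_const.sub hcont_b2)).mul (hcont_x y))).add
        ((hcont_s.mul hcont_b2).mul hK)).add (continuous_const.mul (hcont_x y))
    · intro z
      apply Subtype.ext
      funext y
      show (1 - ((0:I) : ℝ)) * (f1C z).1 y + (((0:I) : ℝ) * (1 - b2 z)) * x.1 y
          + (((0:I) : ℝ) * b2 z) * Kfun N vf uf z 0 y + 0 * x.1 y = (f1C z).1 y
      rw [h01]; ring
    · intro z
      apply Subtype.ext
      funext y
      show (1 - ((1:I) : ℝ)) * (f1C z).1 y + (((1:I) : ℝ) * (1 - b2 z)) * x.1 y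
          + (((1:I) : ℝ) * b2 z) * Kfun N vf uf z 0 y + 0 * x.1 y
          = (1 - b2 z) * x.1 y + (b2 z) * Kfun N vf uf z 0 y + 0 * x.1 y + 0 * x.1 y
      rw [h11]; ring
    · intro t z hz
      have hrz : 1 ≤ rho z := boundary_rho hz
      have hb := b2_eq_zero hrz
      have hcol : (f1C z).1 = x.1 := congrArg Subtype.val (hcollar z (by linarith))
      apply Subtype.ext
      funext y
      show (1 - (t : ℝ)) * (f1C z).1 y + ((t : ℝ) * (1 - b2 z)) * x.1 y
          + ((t : ℝ) * b2 z) * Kfun N vf uf z 0 y + 0 * x.1 y = (f1C z).1 y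
      rw [hcol, hb]; ring
  -- ---------------- homotopy 3 : P3C to EC ----------------
  have H3 : P3C.HomotopyRel EC (Cube.boundary (Fin i)) := by
    refine mkHomotopyRel P3C EC _
      ⟨fun p => ⟨fun y => (1 - b2 p.2) * x.1 y
          + (b2 p.2) * Kfun N vf uf p.2 ((p.1 : ℝ) * chi p.2) y
          + 0 * x.1 y + 0 * x.1 y,
        hW3mem ((p.1 : ℝ) * chi p.2) (mul_nonneg p.1.2.1 (chi_nonneg _)) p.2
          (fun h => by rw [chi_eq_zero h, mul_zero])⟩, ?_⟩ ?_ ?_ ?_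
    · apply Continuous.subtype_mk
      apply continuous_pi
      intro y
      have hK : Continuous (fun p : I × (Fin i → I) =>
          Kfun N vf uf p.2 ((p.1 : ℝ) * chi p.2) y) :=
        continuous_Kfun_coord hNpos vf uf continuous_snd (hcont_s.mul hcont_chi) y
      exact ((((continuous_const.sub hcont_b2).mul (hcont_x y)).add
        (hcont_b2.mul hK)).add (continuous_const.mul (hcont_x y))).add
        (continuous_const.mul (hcont_x y))
    · intro z
      apply Subtype.ext
      funext y
      show (1 - b2 z) * x.1 y + (b2 z) * Kfun N vf uf z (((0:I) : ℝ) * chi z) y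
          + 0 * x.1 y + 0 * x.1 y
          = (1 - b2 z) * x.1 y + (b2 z) * Kfun N vf uf z 0 y + 0 * x.1 y + 0 * x.1 y
      rw [h01, zero_mul]
    · intro z
      apply Subtype.ext
      funext y
      show (1 - b2 z) * x.1 y + (b2 z) * Kfun N vf uf z (((1:I) : ℝ) * chi z) y
          + 0 * x.1 y + 0 * x.1 y
          = (1 - b2 z) * x.1 y + (b2 z) * Kfun N vf uf z (chi z) y + 0 * x.1 y + 0 * x.1 y
      rw [h11, one_mul]
    · intro t z hz
      have hb := b2_eq_zero (boundary_rho hz)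
      apply Subtype.ext
      funext y
      show (1 - b2 z) * x.1 y + (b2 z) * Kfun N vf uf z ((t : ℝ) * chi z) y
          + 0 * x.1 y + 0 * x.1 y
          = (1 - b2 z) * x.1 y + (b2 z) * Kfun N vf uf z 0 y + 0 * x.1 y + 0 * x.1 y
      rw [hb]; ring
  -- ---------------- homotopy 4 : EC to RC ----------------
  have H4 : EC.HomotopyRel RC (Cube.boundary (Fin i)) := by
    refine mkHomotopyRel EC RC _
      ⟨fun p => ⟨fun y => (1 - b2 p.2) * x.1 y
          + (b2 p.2 * (1 - (p.1 : ℝ))) * Kfun N vf uf p.2 (chi p.2) y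
          + (b2 p.2 * (p.1 : ℝ) * (1 - chi p.2)) * dirac v0 y
          + (b2 p.2 * (p.1 : ℝ) * chi p.2) * dirac u0 y,
        hW4mem (p.1 : ℝ) p.1.2.1 p.1.2.2 p.2⟩, ?_⟩ ?_ ?_ ?_
    · apply Continuous.subtype_mk
      apply continuous_pi
      intro y
      have hK : Continuous (fun p : I × (Fin i → I) =>
          Kfun N vf uf p.2 (chi p.2) y) :=
        continuous_Kfun_coord hNpos vf uf continuous_snd hcont_chi y
      exact ((((continuous_const.sub hcont_b2).mul (hcont_x y)).add
        ((hcont_b2.mul (continuous_const.sub hcont_s)).mul hK)).add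
        (((hcont_b2.mul hcont_s).mul (continuous_const.sub hcont_chi)).mul
          continuous_const)).add
        (((hcont_b2.mul hcont_s).mul hcont_chi).mul continuous_const)
    · intro z
      apply Subtype.ext
      funext y
      show (1 - b2 z) * x.1 y + (b2 z * (1 - ((0:I) : ℝ))) * Kfun N vf uf z (chi z) y
          + (b2 z * ((0:I) : ℝ) * (1 - chi z)) * dirac v0 y
          + (b2 z * ((0:I) : ℝ) * chi z) * dirac u0 y
          = (1 - b2 z) * x.1 y + (b2 z) * Kfun N vf uf z (chi z) y + 0 * x.1 y + 0 * x.1 y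
      rw [h01]; ring
    · intro z
      apply Subtype.ext
      funext y
      show (1 - b2 z) * x.1 y + (b2 z * (1 - ((1:I) : ℝ))) * Kfun N vf uf z (chi z) y
          + (b2 z * ((1:I) : ℝ) * (1 - chi z)) * dirac v0 y
          + (b2 z * ((1:I) : ℝ) * chi z) * dirac u0 y
          = Rval x.1 v0 u0 z y
      rw [h11, Rval]; ring
    · intro t z hz
      have hb := b2_eq_zero (boundary_rho hz)
      apply Subtype.ext
      funext y
      show (1 - b2 z) * x.1 y + (b2 z * (1 - (t : ℝ))) * Kfun N vf uf z (chi z) y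
          + (b2 z * (t : ℝ) * (1 - chi z)) * dirac v0 y
          + (b2 z * (t : ℝ) * chi z) * dirac u0 y
          = (1 - b2 z) * x.1 y + (b2 z) * Kfun N vf uf z (chi z) y + 0 * x.1 y + 0 * x.1 y
      rw [hb]; ring
  -- ---------------- chaining everything ----------------
  show (f.1).HomotopicRel Rgen.1 (Cube.boundary (Fin i))
  have h1 : (f.1).HomotopicRel f1C (Cube.boundary (Fin i)) := ⟨H1⟩
  have h2 : f1C.HomotopicRel P3C (Cube.boundary (Fin i)) := ⟨H2⟩
  have h3 : P3C.HomotopicRel EC (Cube.boundary (Fin i)) := ⟨H3⟩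
  have h4 : EC.HomotopicRel RC (Cube.boundary (Fin i)) := ⟨H4⟩
  exact h1.trans (h2.trans (h3.trans h4))




end Stmt2Aux

/-- For all `m, k ≥ 1`, every finite `(mk, k)`-grounded flag complex
is `(m−1)`-connected.  Here an `(mk)`-simplex `Δ` (a clique with `mk+1` vertices) is a
`k`-ground: every vertex is adjacent (or equal) to all but at most `k` vertices of `Δ`. -/
theorem stmt_2 {V : Type*} [Fintype V] (G : SimpleGraph V) (m k : ℕ)
    (hm : 1 ≤ m) (hk : 1 ≤ k)
    (Δ : Finset V) (hclique : G.IsClique ↑Δ) (hcard : Δ.card = m * k + 1)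
    (hground : ∀ v : V, (Δ.filter (fun u => ¬ (G.Adj v u ∨ v = u))).card ≤ k) :
    IsNConnectedSpace (m - 1) (flagRealization G) := by
  constructor
  · have hpos : 0 < Δ.card := by rw [hcard]; omega
    obtain ⟨d0, hd0⟩ := Finset.card_pos.mp hpos
    exact ⟨⟨Stmt2Aux.dirac d0, Stmt2Aux.dirac_mem d0⟩⟩
  · intro i hin x
    have hi : i + 1 ≤ m := by omega
    constructor
    intro a b
    refine Quotient.inductionOn₂ a b (fun fa fb => ?_)
    exact Quotient.sound (Stmt2Aux.homotopic_all hm hclique hcard hground hi x fa fb)
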